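/- For every real number p ≥ 1, every finite ultrametric space embeds isometrically into a finite-dimensional space ℓ_p^N for some natural number N, i.e., into ℝ^N equipped with the norm ‖a‖_p = (∑_{i=1}^N |a_i|^p)^{1/p}. -/

import Mathlib

set_option maxHeartbeats 1000000


open ENNReal

section Aux

universe u

variable {p : ℝ}

private lemma lp_sum_dist_pow (hp : 1 ≤ p) [Fact ((1 : ℝ≥0∞) ≤ ENNReal.ofReal p)]
    {ι : Type*} [Fintype ι] (f g : PiLp (ENNReal.ofReal p) (fun _ : ι => ℝ)) :
    ∑ i, dist (f i) (g i) ^ p = dist f g ^ p := by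
  have hp0 : (0:ℝ) < p := zero_lt_one.trans_le hp
  have htp : (ENNReal.ofReal p).toReal = p := ENNReal.toReal_ofReal hp0.le
  rw [PiLp.dist_eq_sum (by rw [htp]; exact hp0), htp, one_div,
    Real.rpow_inv_rpow (Finset.sum_nonneg fun i _ => Real.rpow_nonneg dist_nonneg p) hp0.ne']

private lemma lp_sum_norm_pow (hp : 1 ≤ p) [Fact ((1 : ℝ≥0∞) ≤ ENNReal.ofReal p)]
    {ι : Type*} [Fintype ι] (f : PiLp (ENNReal.ofReal p) (fun _ : ι => ℝ)) :
    ∑ i, ‖f i‖ ^ p = ‖f‖ ^ p := by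
  have hp0 : (0:ℝ) < p := zero_lt_one.trans_le hp
  have htp : (ENNReal.ofReal p).toReal = p := ENNReal.toReal_ofReal hp0.le
  rw [PiLp.norm_eq_sum (by rw [htp]; exact hp0), htp, one_div,
    Real.rpow_inv_rpow (Finset.sum_nonneg fun i _ => Real.rpow_nonneg (norm_nonneg _) p) hp0.ne']

private lemma lp_dist_of_sum (hp : 1 ≤ p) [Fact ((1 : ℝ≥0∞) ≤ ENNReal.ofReal p)]
    {ι : Type*} [Fintype ι] {f g : PiLp (ENNReal.ofReal p) (fun _ : ι => ℝ)}
    {c : ℝ} (hc : 0 ≤ c) (h : ∑ i, dist (f i) (g i) ^ p = c ^ p) :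
    dist f g = c := by
  have hp0 : (0:ℝ) < p := zero_lt_one.trans_le hp
  rw [lp_sum_dist_pow hp] at h
  have := congrArg (· ^ p⁻¹) h
  simpa [Real.rpow_rpow_inv dist_nonneg hp0.ne', Real.rpow_rpow_inv hc hp0.ne'] using this

private lemma lp_norm_of_sum (hp : 1 ≤ p) [Fact ((1 : ℝ≥0∞) ≤ ENNReal.ofReal p)]
    {ι : Type*} [Fintype ι] {f : PiLp (ENNReal.ofReal p) (fun _ : ι => ℝ)}
    {c : ℝ} (hc : 0 ≤ c) (h : ∑ i, ‖f i‖ ^ p = c ^ p) :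
    ‖f‖ = c := by
  have hp0 : (0:ℝ) < p := zero_lt_one.trans_le hp
  rw [lp_sum_norm_pow hp] at h
  have := congrArg (· ^ p⁻¹) h
  simpa [Real.rpow_rpow_inv (norm_nonneg _) hp0.ne', Real.rpow_rpow_inv hc hp0.ne'] using this

private lemma lp_aux (hp : 1 ≤ p) [Fact ((1 : ℝ≥0∞) ≤ ENNReal.ofReal p)] :
    ∀ n : ℕ, ∀ (X : Type u) (_ : MetricSpace X) (_ : IsUltrametricDist X) (_ : Fintype X),
      Fintype.card X ≤ n → ∀ r : ℝ, 0 ≤ r →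
      Metric.diam (Set.univ : Set X) ^ p ≤ 2 * r ^ p →
      ∃ (ι : Type u) (_ : Fintype ι) (f : X → PiLp (ENNReal.ofReal p) (fun _ : ι => ℝ)),
        Isometry f ∧ ∀ x, ‖f x‖ = r := by
  have hp0 : (0:ℝ) < p := zero_lt_one.trans_le hp
  have hpne : p ≠ 0 := hp0.ne'
  intro n
  induction n with
  | zero =>
    intro X _ _ _ hcard r hr _
    have : IsEmpty X := by
      rw [← Fintype.card_eq_zero_iff]; omega
    exact ⟨PEmpty, inferInstance, fun x => isEmptyElim x,
      fun x => isEmptyElim x, fun x => isEmptyElim x⟩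
  | succ n IH =>
    intro X _ _ _ hcard r hr hdr
    classical
    set D := Metric.diam (Set.univ : Set X) with hDdef
    have hD0 : 0 ≤ D := Metric.diam_nonneg
    have hdle : ∀ x y : X, dist x y ≤ D := fun x y =>
      Metric.dist_le_diam_of_mem Set.finite_univ.isBounded trivial trivial
    by_cases hD : D = 0
    · -- all points at distance 0 from each other; constant embedding
      refine ⟨PUnit, inferInstance, fun _ => (WithLp.equiv _ _).symm (fun _ => r), ?_, ?_⟩
      · apply Isometry.of_dist_eq
        intro x y
        have hxy : dist x y = 0 :=
          le_antisymm (by rw [← hD]; exact hdle x y) dist_nonneg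
        rw [hxy, dist_self]
      · intro x
        apply lp_norm_of_sum hp hr
        simp [Real.norm_eq_abs, abs_of_nonneg hr]
    · have hDpos : 0 < D := lt_of_le_of_ne hD0 (Ne.symm hD)
      -- the equivalence relation "distance < D"
      let s : Setoid X := ⟨fun x y => dist x y < D,
        ⟨fun x => by simpa using hDpos,
         fun {x y} h => by rwa [dist_comm] at h,
         fun {x y z} h1 h2 =>
           lt_of_le_of_lt (IsUltrametricDist.dist_triangle_max x y z) (max_lt h1 h2)⟩⟩
      let Q := Quotient s
      haveI : Fintype Q := Fintype.ofFinite Q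
      -- each class is a proper subset
      have hproper : ∀ q : Q, ∃ y : X, Quotient.mk s y ≠ q := by
        intro q
        obtain ⟨x, rfl⟩ := Quotient.exists_rep q
        by_contra hcon
        push_neg at hcon
        have hlt : ∀ y : X, dist x y < D := by
          intro y
          have h1 : dist y x < D := Quotient.exact (hcon y)
          rwa [dist_comm] at h1
        obtain ⟨y0, -, hy0⟩ := Finset.exists_max_image Finset.univ (fun y => dist x y)
          ⟨x, Finset.mem_univ x⟩
        have hdiam : D ≤ dist x y0 := by
          apply Metric.diam_le_of_forall_dist_le dist_nonneg
          intro a _ b _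
          calc dist a b ≤ max (dist a x) (dist x b) :=
                IsUltrametricDist.dist_triangle_max a x b
            _ ≤ dist x y0 := by
                apply max_le
                · rw [dist_comm]; exact hy0 a (Finset.mem_univ a)
                · exact hy0 b (Finset.mem_univ b)
        exact absurd (hlt y0) (not_lt.mpr hdiam)
      -- embed each class
      have hr0 : (0:ℝ) ≤ (D ^ p / 2) ^ (1/p) := Real.rpow_nonneg (by positivity) _
      have hr0p : ((D ^ p / 2) ^ (1/p)) ^ p = D ^ p / 2 := by
        rw [one_div, Real.rpow_inv_rpow (by positivity) hpne]
      have hfib : ∀ q : Q, ∃ (ι : Type u) (_ : Fintype ι)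
          (f : {x : X // Quotient.mk s x = q} → PiLp (ENNReal.ofReal p) (fun _ : ι => ℝ)),
          Isometry f ∧ ∀ x, ‖f x‖ = (D ^ p / 2) ^ (1/p) := by
        intro q
        obtain ⟨y, hy⟩ := hproper q
        have hcard' : Fintype.card {x : X // Quotient.mk s x = q} ≤ n := by
          have h2 : Fintype.card {x : X // Quotient.mk s x = q} < Fintype.card X :=
            Fintype.card_subtype_lt (p := fun x => Quotient.mk s x = q) hy
          omega
        refine IH _ _ inferInstance inferInstance hcard' _ hr0 ?_
        rw [hr0p]
        have hsub : Metric.diam (Set.univ : Set {x : X // Quotient.mk s x = q}) ≤ D := by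
          apply Metric.diam_le_of_forall_dist_le hD0
          intro a _ b _
          rw [Subtype.dist_eq]
          exact hdle a b
        calc Metric.diam (Set.univ : Set {x : X // Quotient.mk s x = q}) ^ p
            ≤ D ^ p := Real.rpow_le_rpow Metric.diam_nonneg hsub hp0.le
          _ = 2 * (D ^ p / 2) := by ring
      choose ι ifin f hfiso hfnorm using hfib
      -- the extra shared coordinate
      have hrp : D ^ p / 2 ≤ r ^ p := by linarith
      have ht0 : (0:ℝ) ≤ (r ^ p - D ^ p / 2) ^ (1/p) := Real.rpow_nonneg (by linarith) _
      have htpp : ((r ^ p - D ^ p / 2) ^ (1/p)) ^ p = r ^ p - D ^ p / 2 := by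
        rw [one_div, Real.rpow_inv_rpow (by linarith) hpne]
      set t : ℝ := (r ^ p - D ^ p / 2) ^ (1/p) with htdef
      -- but blocks need a common index type; use sigma
      letI : ∀ q : Q, Fintype (ι q) := fun q => ifin q
      let F : X → PiLp (ENNReal.ofReal p) (fun _ : Option ((q : Q) × ι q) => ℝ) := fun x =>
        (WithLp.equiv _ _).symm (fun i =>
          match i with
          | some ⟨c, j⟩ =>
            if h : Quotient.mk s x = c then f c ⟨x, h⟩ j else 0
          | none => t)
      have hFl : ∀ (x : X) (c : Q) (j : ι c),
          F x (some ⟨c, j⟩) = if h : Quotient.mk s x = c then f c ⟨x, h⟩ j else 0 := by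
        intro x c j; rfl
      have hFr : ∀ (x : X), F x none = t := fun x => rfl
      -- block sums for the norm
      have hblocknorm : ∀ (x : X) (c : Q),
          ∑ j : ι c, ‖F x (some ⟨c, j⟩)‖ ^ p
            = if Quotient.mk s x = c then D ^ p / 2 else 0 := by
        intro x c
        by_cases h : Quotient.mk s x = c
        · rw [if_pos h]
          rw [← hr0p, ← hfnorm c ⟨x, h⟩, ← lp_sum_norm_pow hp]
          apply Finset.sum_congr rfl
          intro j _
          rw [hFl, dif_pos h]
        · rw [if_neg h]
          apply Finset.sum_eq_zero
          intro j _
          rw [hFl, dif_neg h]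
          simp [Real.zero_rpow hpne]
      -- norms
      have hFnorm : ∀ x : X, ‖F x‖ = r := by
        intro x
        apply lp_norm_of_sum hp hr
        rw [Fintype.sum_option]
        have h1 : ∑ c : Q, ∑ j : ι c, ‖F x (some ⟨c, j⟩)‖ ^ p = D ^ p / 2 := by
          simp_rw [hblocknorm x]
          rw [Finset.sum_ite_eq]
          simp
        have h2 : ‖F x none‖ ^ p = r ^ p - D ^ p / 2 := by
          rw [hFr]
          simp [Real.norm_eq_abs, abs_of_nonneg ht0, htpp]
        rw [show (∑ x_1 : (q : Q) × ι q, ‖F x (some x_1)‖ ^ p)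
            = ∑ c : Q, ∑ j : ι c, ‖F x (some ⟨c, j⟩)‖ ^ p from Finset.sum_sigma _ _ _,
          h1, h2]
        ring
      -- block sums for distances
      have hblockdist : ∀ (x y : X) (c : Q),
          ∑ j : ι c, dist (F x (some ⟨c, j⟩)) (F y (some ⟨c, j⟩)) ^ p
            = (if Quotient.mk s x = c then
                (if Quotient.mk s y = c then dist x y ^ p else D ^ p / 2)
               else (if Quotient.mk s y = c then D ^ p / 2 else 0)) := by
        intro x y c
        by_cases hx : Quotient.mk s x = c <;> by_cases hy : Quotient.mk s y = c
        · rw [if_pos hx, if_pos hy]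
          have : dist x y = dist (⟨x, hx⟩ : {z : X // Quotient.mk s z = c}) ⟨y, hy⟩ := by
            rw [Subtype.dist_eq]
          rw [this, ← (hfiso c).dist_eq, ← lp_sum_dist_pow hp]
          apply Finset.sum_congr rfl
          intro j _
          rw [hFl, hFl, dif_pos hx, dif_pos hy]
        · rw [if_pos hx, if_neg hy]
          rw [← hr0p, ← hfnorm c ⟨x, hx⟩, ← lp_sum_norm_pow hp]
          apply Finset.sum_congr rfl
          intro j _
          rw [hFl, hFl, dif_pos hx, dif_neg hy, dist_zero_right]
        · rw [if_neg hx, if_pos hy]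
          rw [← hr0p, ← hfnorm c ⟨y, hy⟩, ← lp_sum_norm_pow hp]
          apply Finset.sum_congr rfl
          intro j _
          rw [hFl, hFl, dif_neg hx, dif_pos hy, dist_comm, dist_zero_right]
        · rw [if_neg hx, if_neg hy]
          apply Finset.sum_eq_zero
          intro j _
          rw [hFl, hFl, dif_neg hx, dif_neg hy, dist_self, Real.zero_rpow hpne]
      -- distances
      have hFiso : Isometry F := by
        apply Isometry.of_dist_eq
        intro x y
        apply lp_dist_of_sum hp dist_nonneg
        rw [Fintype.sum_option]
        rw [show (∑ x_1 : (_ : Q) × _, dist (F x (some x_1)) (F y (some x_1)) ^ p)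
            = ∑ c : Q, ∑ j : ι c, dist (F x (some ⟨c, j⟩)) (F y (some ⟨c, j⟩)) ^ p
            from Finset.sum_sigma _ _ _]
        have h2 : dist (F x none) (F y none) ^ p = 0 := by
          rw [hFr, hFr, dist_self, Real.zero_rpow hpne]
        rw [h2, zero_add]
        simp_rw [hblockdist x y]
        by_cases hxy : Quotient.mk s x = Quotient.mk s y
        · -- same class
          have hcongr : ∀ c : Q,
              (if Quotient.mk s x = c then
                (if Quotient.mk s y = c then dist x y ^ p else D ^ p / 2)
               else (if Quotient.mk s y = c then D ^ p / 2 else 0))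
              = if Quotient.mk s x = c then dist x y ^ p else 0 := by
            intro c
            by_cases hc : Quotient.mk s x = c
            · rw [if_pos hc, if_pos (hxy.symm.trans hc), if_pos hc]
            · rw [if_neg hc, if_neg (fun h => hc (hxy.trans h)), if_neg hc]
          rw [Finset.sum_congr rfl (fun c _ => hcongr c), Finset.sum_ite_eq]
          simp
        · -- different classes: distance is exactly D
          have hxyD : dist x y = D := by
            refine le_antisymm (hdle x y) (not_lt.mp ?_)
            intro hlt
            exact hxy (Quotient.sound hlt)
          have hsplit : ∀ c : Q,
              (if Quotient.mk s x = c then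
                (if Quotient.mk s y = c then dist x y ^ p else D ^ p / 2)
               else (if Quotient.mk s y = c then D ^ p / 2 else 0))
              = (if Quotient.mk s x = c then D ^ p / 2 else 0)
                + (if Quotient.mk s y = c then D ^ p / 2 else 0) := by
            intro c
            by_cases hx : Quotient.mk s x = c <;> by_cases hy : Quotient.mk s y = c
            · exact absurd (hx.trans hy.symm) hxy
            · simp [hx, hy]
            · simp [hx, hy]
            · simp [hx, hy]
          rw [Finset.sum_congr rfl (fun c _ => hsplit c), Finset.sum_add_distrib,
            Finset.sum_ite_eq, Finset.sum_ite_eq]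
          simp only [Finset.mem_univ, if_true, hxyD]
          ring
      exact ⟨Option ((q : Q) × ι q), inferInstance, F, hFiso, hFnorm⟩

end Aux

/-- For `p ≥ 1`, every finite ultrametric space embeds isometrically into `ℓ_p^N`
(that is, `ℝ^N` with the `p`-norm) for some natural number `N`. -/
theorem finite_ultrametric_embeds_into_finite_dimensional_lp (p : ℝ) (hp : 1 ≤ p)
    (X : Type*) [MetricSpace X] [IsUltrametricDist X] [Finite X] :
    haveI : Fact ((1 : ℝ≥0∞) ≤ ENNReal.ofReal p) := ⟨ENNReal.one_le_ofReal.mpr hp⟩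
    ∃ (N : ℕ) (f : X → PiLp (ENNReal.ofReal p) (fun _ : Fin N => ℝ)), Isometry f := by
  haveI : Fact ((1 : ℝ≥0∞) ≤ ENNReal.ofReal p) := ⟨ENNReal.one_le_ofReal.mpr hp⟩
  haveI : Fintype X := Fintype.ofFinite X
  have hD : Metric.diam (Set.univ : Set X) ^ p
      ≤ 2 * Metric.diam (Set.univ : Set X) ^ p := by
    have : (0:ℝ) ≤ Metric.diam (Set.univ : Set X) ^ p :=
      Real.rpow_nonneg Metric.diam_nonneg p
    linarith
  obtain ⟨ι, ifin, f, hiso, -⟩ := lp_aux hp (Fintype.card X) X inferInstance inferInstance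
    inferInstance le_rfl (Metric.diam (Set.univ : Set X)) Metric.diam_nonneg hD
  refine ⟨Fintype.card ι, fun x =>
    (LinearIsometryEquiv.piLpCongrLeft (ENNReal.ofReal p) ℝ ℝ (Fintype.equivFin ι)) (f x), ?_⟩
  exact (LinearIsometryEquiv.piLpCongrLeft (ENNReal.ofReal p) ℝ ℝ
    (Fintype.equivFin ι)).isometry.comp hiso
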